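/- For positive definite matrices A, B, the logarithmic mean AλB = ∫₀¹ A #ₜ B dt satisfies (A⁻¹∇B⁻¹)⁻¹ = 2(A⁻¹+B⁻¹)⁻¹ ≤ AλB ≤ (A+B)/2, where A #ₜ B = A^(1/2)(A^(-1/2)BA^(-1/2))^t A^(1/2) is the weighted geometric mean. -/

import Mathlib

open Matrix
open scoped ComplexOrder

/-- The weighted geometric mean `A #ₜ B = A^{1/2} (A^{-1/2} B A^{-1/2})^t A^{1/2}`. -/
noncomputable def geomMean {m : ℕ} (t : ℝ) (A B : Matrix (Fin m) (Fin m) ℂ) :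
    Matrix (Fin m) (Fin m) ℂ :=
  cfc Real.sqrt A *
    cfc (fun x : ℝ => x ^ t) (cfc (fun x => (Real.sqrt x)⁻¹) A * B * cfc (fun x => (Real.sqrt x)⁻¹) A) *
    cfc Real.sqrt A


namespace Matrix.IsHermitian
variable {m : ℕ} {M : Matrix (Fin m) (Fin m) ℂ}

lemma cfcE_mul (hM : M.IsHermitian) (f g : ℝ → ℝ) :
    hM.cfc f * hM.cfc g = hM.cfc (fun x => f x * g x) := by
  unfold Matrix.IsHermitian.cfc
  simp only [Unitary.conjStarAlgAut_apply]
  have h1 : (star (eigenvectorUnitary hM : Matrix (Fin m) (Fin m) ℂ)) *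
      (eigenvectorUnitary hM : Matrix (Fin m) (Fin m) ℂ) = 1 :=
    Unitary.star_mul_self_of_mem (SetLike.coe_mem _)
  have key : ∀ a b c d e f : Matrix (Fin m) (Fin m) ℂ,
      (a * b * c) * (d * e * f) = a * (b * (c * d) * e) * f := by
    intros; simp only [mul_assoc]
  rw [key, h1, mul_one, diagonal_mul_diagonal]
  congr! with i
  simp

lemma cfcE_add (hM : M.IsHermitian) (f g : ℝ → ℝ) :
    hM.cfc f + hM.cfc g = hM.cfc (fun x => f x + g x) := by
  unfold Matrix.IsHermitian.cfc
  simp only [Unitary.conjStarAlgAut_apply]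
  rw [← add_mul, ← mul_add, diagonal_add]
  congr! with i
  simp

lemma cfcE_smul (hM : M.IsHermitian) (r : ℝ) (f : ℝ → ℝ) :
    r • hM.cfc f = hM.cfc (fun x => r * f x) := by
  unfold Matrix.IsHermitian.cfc
  simp only [Unitary.conjStarAlgAut_apply]
  rw [← smul_mul_assoc, ← mul_smul_comm, ← diagonal_smul]
  congr 2
  ext i j
  by_cases hij : i = j <;> simp [diagonal, hij, Complex.real_smul]

lemma cfcE_congr (hM : M.IsHermitian) {f g : ℝ → ℝ}
    (h : ∀ i, f (hM.eigenvalues i) = g (hM.eigenvalues i)) : hM.cfc f = hM.cfc g := by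
  unfold Matrix.IsHermitian.cfc
  simp only [Unitary.conjStarAlgAut_apply]
  congr 2
  ext i j
  by_cases hij : i = j <;> simp [diagonal, hij, h]

lemma cfcE_one (hM : M.IsHermitian) : hM.cfc (fun _ => 1) = 1 := by
  unfold Matrix.IsHermitian.cfc
  have h1 : (eigenvectorUnitary hM : Matrix (Fin m) (Fin m) ℂ) *
      (star (eigenvectorUnitary hM : Matrix (Fin m) (Fin m) ℂ)) = 1 :=
    Unitary.mul_star_self_of_mem (SetLike.coe_mem _)
  simpa [Function.comp_def, diagonal_one] using h1

lemma cfcE_id (hM : M.IsHermitian) : hM.cfc (fun x => x) = M := by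
  conv_rhs => rw [hM.spectral_theorem]
  rfl

lemma cfcE_posSemidef (hM : M.IsHermitian) {f : ℝ → ℝ}
    (h : ∀ i, 0 ≤ f (hM.eigenvalues i)) : (hM.cfc f).PosSemidef := by
  unfold Matrix.IsHermitian.cfc
  have hd : PosSemidef (diagonal ((Complex.ofReal ∘ f ∘ hM.eigenvalues) :
      Fin m → ℂ)) := PosSemidef.diagonal fun i => by
    simpa using Complex.zero_le_real.2 (h i)
  simpa [star_eq_conjTranspose] using hd.mul_mul_conjTranspose_same
    (eigenvectorUnitary hM : Matrix (Fin m) (Fin m) ℂ)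

lemma cfcE_isHermitian (hM : M.IsHermitian) (f : ℝ → ℝ) : (hM.cfc f).IsHermitian := by
  rw [← hM.cfc_eq]
  have h2 : _root_.IsSelfAdjoint (cfc f M) := cfc_predicate f M
  exact h2


lemma cfcE_sub (hM : M.IsHermitian) (f g : ℝ → ℝ) :
    hM.cfc f - hM.cfc g = hM.cfc (fun x => f x - g x) := by
  unfold Matrix.IsHermitian.cfc
  simp only [Unitary.conjStarAlgAut_apply]
  rw [← sub_mul, ← mul_sub, diagonal_sub]
  congr 2
  ext i j
  by_cases hij : i = j <;> simp [diagonal, hij]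

end Matrix.IsHermitian

namespace GM

lemma scalar_upper {t x : ℝ} (ht0 : 0 ≤ t) (ht1 : t ≤ 1) (hx : 0 < x) :
    x ^ t ≤ (1 - t) + t * x := by
  have := Real.geom_mean_le_arith_mean2_weighted (sub_nonneg.2 ht1) ht0
    zero_le_one hx.le (by ring)
  simpa using this

lemma scalar_lower {t x : ℝ} (ht0 : 0 ≤ t) (ht1 : t ≤ 1) (hx : 0 < x) :
    4 * (1 + x⁻¹)⁻¹ ≤ x ^ t + x ^ (1 - t) := by
  set a := x ^ t with ha'
  set b := x ^ (1 - t) with hb'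
  have ha : 0 < a := Real.rpow_pos_of_pos hx t
  have hb : 0 < b := Real.rpow_pos_of_pos hx (1 - t)
  have hab : a * b = x := by
    rw [ha', hb', ← Real.rpow_add hx]; simp
  have h1 : (1 + x⁻¹)⁻¹ = x / (x + 1) := by
    field_simp
  rw [h1, ← hab, mul_div_assoc', div_le_iff₀ (by positivity)]
  nlinarith [mul_nonneg hb.le (sq_nonneg (a - 1)), mul_nonneg ha.le (sq_nonneg (b - 1)),
    mul_pos ha hb]

variable {m : ℕ}

noncomputable def Sq (A : Matrix (Fin m) (Fin m) ℂ) : Matrix (Fin m) (Fin m) ℂ :=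
  cfc Real.sqrt A

noncomputable def Rq (A : Matrix (Fin m) (Fin m) ℂ) : Matrix (Fin m) (Fin m) ℂ :=
  cfc (fun x => (Real.sqrt x)⁻¹) A

noncomputable def Cm (A B : Matrix (Fin m) (Fin m) ℂ) : Matrix (Fin m) (Fin m) ℂ :=
  Rq A * B * Rq A

lemma geomMean_eq (t : ℝ) (A B : Matrix (Fin m) (Fin m) ℂ) :
    geomMean t A B = Sq A * cfc (fun x : ℝ => x ^ t) (Cm A B) * Sq A := rfl

lemma ctsOn (f : ℝ → ℝ) (M : Matrix (Fin m) (Fin m) ℂ) : ContinuousOn f (spectrum ℝ M) := by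
  rw [continuousOn_iff_continuous_restrict]; fun_prop

lemma spec_pos {A : Matrix (Fin m) (Fin m) ℂ} (hA : A.PosDef) :
    ∀ x ∈ spectrum ℝ A, 0 < x := by
  intro x hx
  rw [hA.1.spectrum_real_eq_range_eigenvalues] at hx
  obtain ⟨i, rfl⟩ := hx
  exact hA.eigenvalues_pos i

lemma Sq_isHermitian (A : Matrix (Fin m) (Fin m) ℂ) : (Sq A).IsHermitian := by
  have h : _root_.IsSelfAdjoint (cfc Real.sqrt A) := cfc_predicate _ A
  exact h

lemma Rq_isHermitian (A : Matrix (Fin m) (Fin m) ℂ) : (Rq A).IsHermitian := by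
  have h : _root_.IsSelfAdjoint (cfc (fun x => (Real.sqrt x)⁻¹) A) := cfc_predicate _ A
  exact h

variable {A B : Matrix (Fin m) (Fin m) ℂ}

lemma Sq_mul_Rq (hA : A.PosDef) : Sq A * Rq A = 1 := by
  unfold Sq Rq
  rw [← cfc_mul _ _ A (ctsOn _ _) (ctsOn _ _)]
  have h : cfc (fun x => Real.sqrt x * (Real.sqrt x)⁻¹) A = cfc (fun _ : ℝ => (1:ℝ)) A :=
    cfc_congr fun x hx => by
      field_simp [Real.sqrt_ne_zero'.2 (spec_pos hA x hx)]
  rw [h, cfc_const_one ℝ A hA.1.isSelfAdjoint]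

lemma Rq_mul_Sq (hA : A.PosDef) : Rq A * Sq A = 1 := by
  unfold Sq Rq
  rw [← cfc_mul _ _ A (ctsOn _ _) (ctsOn _ _)]
  have h : cfc (fun x => (Real.sqrt x)⁻¹ * Real.sqrt x) A = cfc (fun _ : ℝ => (1:ℝ)) A :=
    cfc_congr fun x hx => by
      field_simp [Real.sqrt_ne_zero'.2 (spec_pos hA x hx)]
  rw [h, cfc_const_one ℝ A hA.1.isSelfAdjoint]

lemma Sq_mul_Sq (hA : A.PosDef) : Sq A * Sq A = A := by
  unfold Sq
  rw [← cfc_mul _ _ A (ctsOn _ _) (ctsOn _ _)]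
  have h : cfc (fun x => Real.sqrt x * Real.sqrt x) A = cfc (fun x : ℝ => x) A :=
    cfc_congr fun x hx => Real.mul_self_sqrt (spec_pos hA x hx).le
  rw [h, cfc_id' ℝ A hA.1.isSelfAdjoint]

lemma Rq_isUnit (hA : A.PosDef) : IsUnit (Rq A) :=
  ⟨⟨Rq A, Sq A, Rq_mul_Sq hA, Sq_mul_Rq hA⟩, rfl⟩

lemma Cm_posDef (hA : A.PosDef) (hB : B.PosDef) : (Cm A B).PosDef := by
  have hR := Rq_isHermitian A
  refine PosDef.of_dotProduct_mulVec_pos ?_ ?_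
  · have h := isHermitian_conjTranspose_mul_mul (Rq A) hB.1
    rwa [hR.eq] at h
  · intro x hx
    have hinj : Function.Injective ((Rq A).mulVec) :=
      mulVec_injective_iff_isUnit.2 (Rq_isUnit hA)
    have hx' : (Rq A) *ᵥ x ≠ 0 := fun h => hx (hinj (by simpa using h))
    have h2 := hB.dotProduct_mulVec_pos hx'
    have : Cm A B = (Rq A)ᴴ * B * Rq A := by rw [hR.eq]; rfl
    rw [this]
    simpa only [star_mulVec, dotProduct_mulVec, vecMul_vecMul] using h2

lemma B_eq (hA : A.PosDef) : Sq A * Cm A B * Sq A = B := by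
  unfold Cm
  calc Sq A * (Rq A * B * Rq A) * Sq A
      = (Sq A * Rq A) * B * (Rq A * Sq A) := by noncomm_ring
    _ = B := by rw [Sq_mul_Rq hA, Rq_mul_Sq hA, one_mul, mul_one]

lemma ev_pos (hA : A.PosDef) (hB : B.PosDef) (hC : (Cm A B).IsHermitian) (i : Fin m) :
    0 < hC.eigenvalues i :=
  (Cm_posDef hA hB).eigenvalues_pos i

lemma Ainv (hA : A.PosDef) : A⁻¹ = Rq A * Rq A := by
  apply inv_eq_right_inv
  calc A * (Rq A * Rq A) = (Sq A * Sq A) * (Rq A * Rq A) := by rw [Sq_mul_Sq hA]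
    _ = Sq A * (Sq A * Rq A) * Rq A := by noncomm_ring
    _ = 1 := by rw [Sq_mul_Rq hA, mul_one, Sq_mul_Rq hA]

lemma Binv (hA : A.PosDef) (hB : B.PosDef) (hC : (Cm A B).IsHermitian) :
    B⁻¹ = Rq A * hC.cfc (fun x => x⁻¹) * Rq A := by
  apply inv_eq_right_inv
  calc B * (Rq A * hC.cfc (fun x => x⁻¹) * Rq A)
      = (Sq A * Cm A B * Sq A) * (Rq A * hC.cfc (fun x => x⁻¹) * Rq A) := by
        rw [B_eq hA]
    _ = Sq A * Cm A B * (Sq A * Rq A) * hC.cfc (fun x => x⁻¹) * Rq A := by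
        noncomm_ring
    _ = Sq A * (Cm A B * hC.cfc (fun x => x⁻¹)) * Rq A := by
        rw [Sq_mul_Rq hA]; noncomm_ring
    _ = Sq A * (hC.cfc (fun x => x) * hC.cfc (fun x => x⁻¹)) * Rq A := by
        rw [hC.cfcE_id]
    _ = Sq A * Rq A := by
        rw [hC.cfcE_mul, hC.cfcE_congr (g := fun _ => 1)
          (fun i => mul_inv_cancel₀ (ev_pos hA hB hC i).ne'), hC.cfcE_one, mul_one]
    _ = 1 := Sq_mul_Rq hA

lemma sum_inv (hA : A.PosDef) (hB : B.PosDef) (hC : (Cm A B).IsHermitian) :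
    A⁻¹ + B⁻¹ = Rq A * hC.cfc (fun x => 1 + x⁻¹) * Rq A := by
  rw [Ainv hA, Binv hA hB hC, ← hC.cfcE_add, hC.cfcE_one]
  noncomm_ring

lemma prod_one (hA : A.PosDef) (hB : B.PosDef) (hC : (Cm A B).IsHermitian) :
    (A⁻¹ + B⁻¹) * (Sq A * hC.cfc (fun x => (1 + x⁻¹)⁻¹) * Sq A) = 1 := by
  have hg : ∀ i, (0:ℝ) < 1 + (hC.eigenvalues i)⁻¹ := fun i => by
    have := ev_pos hA hB hC i; positivity
  calc (A⁻¹ + B⁻¹) * (Sq A * hC.cfc (fun x => (1 + x⁻¹)⁻¹) * Sq A)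
      = Rq A * hC.cfc (fun x => 1 + x⁻¹) * (Rq A * Sq A) *
          hC.cfc (fun x => (1 + x⁻¹)⁻¹) * Sq A := by
        rw [sum_inv hA hB hC]; noncomm_ring
    _ = Rq A * (hC.cfc (fun x => 1 + x⁻¹) * hC.cfc (fun x => (1 + x⁻¹)⁻¹)) * Sq A := by
        rw [Rq_mul_Sq hA]; noncomm_ring
    _ = Rq A * Sq A := by
        rw [hC.cfcE_mul, hC.cfcE_congr (g := fun _ => 1)
          (fun i => mul_inv_cancel₀ (hg i).ne'), hC.cfcE_one, mul_one]
    _ = 1 := Rq_mul_Sq hA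

lemma inv_sum (hA : A.PosDef) (hB : B.PosDef) (hC : (Cm A B).IsHermitian) :
    (A⁻¹ + B⁻¹)⁻¹ = Sq A * hC.cfc (fun x => (1 + x⁻¹)⁻¹) * Sq A :=
  inv_eq_right_inv (prod_one hA hB hC)

lemma part1 (hA : A.PosDef) (hB : B.PosDef) :
    ((2:ℝ)⁻¹ • (A⁻¹ + B⁻¹))⁻¹ = (2:ℝ) • (A⁻¹ + B⁻¹)⁻¹ := by
  have hC := (Cm_posDef hA hB).1
  apply inv_eq_right_inv
  rw [smul_mul_assoc, mul_smul_comm, smul_smul, inv_sum hA hB hC, prod_one hA hB hC]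
  norm_num

lemma conjSq_psd (hA : A.PosDef) (hB : B.PosDef) {hC : (Cm A B).IsHermitian} {f : ℝ → ℝ}
    (h : ∀ i, 0 ≤ f (hC.eigenvalues i)) : (Sq A * hC.cfc f * Sq A).PosSemidef := by
  have := (hC.cfcE_posSemidef h).mul_mul_conjTranspose_same (Sq A)
  rwa [(Sq_isHermitian A).eq] at this

lemma geomMean_posSemidef (hA : A.PosDef) (hB : B.PosDef) (t : ℝ) :
    (geomMean t A B).PosSemidef := by
  have hC := (Cm_posDef hA hB).1
  rw [geomMean_eq, hC.cfc_eq]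
  exact conjSq_psd hA hB fun i => Real.rpow_nonneg (ev_pos hA hB hC i).le t

lemma H2_posSemidef (hA : A.PosDef) (hB : B.PosDef) : ((A⁻¹ + B⁻¹)⁻¹).PosSemidef := by
  have hC := (Cm_posDef hA hB).1
  rw [inv_sum hA hB hC]
  exact conjSq_psd hA hB fun i => by
    have := ev_pos hA hB hC i; positivity

lemma sandwich_upper (hA : A.PosDef) (hB : B.PosDef) {t : ℝ} (ht0 : 0 ≤ t) (ht1 : t ≤ 1) :
    ((1 - t) • A + t • B - geomMean t A B).PosSemidef := by
  have hC := (Cm_posDef hA hB).1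
  have e : hC.cfc (fun x => (1 - t) * 1 + t * x - x ^ t)
      = (1 - t) • (1 : Matrix (Fin m) (Fin m) ℂ) + t • Cm A B - hC.cfc (fun x => x ^ t) := by
    rw [show (1 - t) • (1 : Matrix (Fin m) (Fin m) ℂ) + t • Cm A B - hC.cfc (fun x => x ^ t)
        = (1 - t) • hC.cfc (fun _ => 1) + t • hC.cfc (fun x => x) - hC.cfc (fun x => x ^ t) by
      rw [hC.cfcE_one, hC.cfcE_id]]
    rw [hC.cfcE_smul, hC.cfcE_smul, hC.cfcE_add, hC.cfcE_sub]
  have key : (1 - t) • A + t • B - geomMean t A B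
      = Sq A * hC.cfc (fun x => (1 - t) * 1 + t * x - x ^ t) * Sq A := by
    rw [geomMean_eq, hC.cfc_eq, e]
    simp only [mul_sub, sub_mul, mul_add, add_mul, mul_smul_comm, smul_mul_assoc, mul_one]
    rw [Sq_mul_Sq hA, B_eq hA]
  rw [key]
  exact conjSq_psd hA hB fun i => by
    have hx := ev_pos hA hB (Cm_posDef hA hB).1 i
    have := scalar_upper ht0 ht1 hx
    simp only [mul_one]
    linarith

lemma sandwich_lower (hA : A.PosDef) (hB : B.PosDef) {t : ℝ} (ht0 : 0 ≤ t) (ht1 : t ≤ 1) :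
    (geomMean t A B + geomMean (1 - t) A B - (4:ℝ) • (A⁻¹ + B⁻¹)⁻¹).PosSemidef := by
  have hC := (Cm_posDef hA hB).1
  have e : hC.cfc (fun x => x ^ t + x ^ (1 - t) - 4 * (1 + x⁻¹)⁻¹)
      = hC.cfc (fun x => x ^ t) + hC.cfc (fun x => x ^ (1 - t))
        - (4:ℝ) • hC.cfc (fun x => (1 + x⁻¹)⁻¹) := by
    rw [hC.cfcE_smul, hC.cfcE_add, hC.cfcE_sub]
  have key : geomMean t A B + geomMean (1 - t) A B - (4:ℝ) • (A⁻¹ + B⁻¹)⁻¹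
      = Sq A * hC.cfc (fun x => x ^ t + x ^ (1 - t) - 4 * (1 + x⁻¹)⁻¹) * Sq A := by
    rw [geomMean_eq, geomMean_eq, hC.cfc_eq (fun x => x ^ t), hC.cfc_eq (fun x => x ^ (1 - t)),
      inv_sum hA hB hC, e]
    simp only [mul_sub, sub_mul, mul_add, add_mul, mul_smul_comm, smul_mul_assoc]
  rw [key]
  exact conjSq_psd hA hB fun i => by
    have hx := ev_pos hA hB (Cm_posDef hA hB).1 i
    have := scalar_lower ht0 ht1 hx
    linarith

lemma cont_rpow {c : ℝ} (hc : 0 < c) : Continuous fun t : ℝ => c ^ t := by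
  have h : (fun t : ℝ => c ^ t) = fun t => Real.exp (Real.log c * t) :=
    funext fun t => Real.rpow_def_of_pos hc t
  rw [h]; fun_prop

lemma cont_entry (hA : A.PosDef) (hB : B.PosDef) (i j : Fin m) :
    Continuous fun t => geomMean t A B i j := by
  have hC := (Cm_posDef hA hB).1
  have h : ∀ t : ℝ, geomMean t A B = Sq A *
      ((hC.eigenvectorUnitary : Matrix (Fin m) (Fin m) ℂ) *
        diagonal (RCLike.ofReal ∘ (fun x => x ^ t) ∘ hC.eigenvalues) *
        star (hC.eigenvectorUnitary : Matrix (Fin m) (Fin m) ℂ)) * Sq A := fun t => by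
    rw [geomMean_eq, hC.cfc_eq]; rfl
  simp only [h]
  apply Continuous.matrix_elem
  refine (continuous_const.matrix_mul ((continuous_const.matrix_mul
    (Continuous.matrix_diagonal ?_)).matrix_mul continuous_const)).matrix_mul continuous_const
  refine continuous_pi fun p => ?_
  exact Complex.continuous_ofReal.comp (cont_rpow (ev_pos hA hB hC p))

open MeasureTheory in
lemma psd_re {M : Matrix (Fin m) (Fin m) ℂ} (hM : M.PosSemidef) (x : Fin m → ℂ) :
    0 ≤ (star x ⬝ᵥ (M *ᵥ x)).re :=
  (Complex.le_def.mp (hM.dotProduct_mulVec_nonneg x)).1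

lemma psd_im {M : Matrix (Fin m) (Fin m) ℂ} (hM : M.PosSemidef) (x : Fin m → ℂ) :
    (star x ⬝ᵥ (M *ᵥ x)).im = 0 :=
  ((Complex.le_def.mp (hM.dotProduct_mulVec_nonneg x)).2).symm

lemma herm_smul {M : Matrix (Fin m) (Fin m) ℂ} (h : M.IsHermitian) (r : ℝ) :
    (r • M).IsHermitian := by
  have : (r • M)ᴴ = r • Mᴴ := by
    ext i j
    simp [conjTranspose_apply, Complex.real_smul]
  rw [Matrix.IsHermitian, this, h.eq]

lemma quad_sub (M N : Matrix (Fin m) (Fin m) ℂ) (x : Fin m → ℂ) :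
    star x ⬝ᵥ ((M - N) *ᵥ x) = star x ⬝ᵥ (M *ᵥ x) - star x ⬝ᵥ (N *ᵥ x) := by
  rw [Matrix.sub_mulVec, dotProduct_sub]

lemma quad_add (M N : Matrix (Fin m) (Fin m) ℂ) (x : Fin m → ℂ) :
    star x ⬝ᵥ ((M + N) *ᵥ x) = star x ⬝ᵥ (M *ᵥ x) + star x ⬝ᵥ (N *ᵥ x) := by
  rw [Matrix.add_mulVec, dotProduct_add]

lemma quad_smul (r : ℝ) (M : Matrix (Fin m) (Fin m) ℂ) (x : Fin m → ℂ) :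
    star x ⬝ᵥ ((r • M) *ᵥ x) = r • (star x ⬝ᵥ (M *ᵥ x)) := by
  rw [Matrix.smul_mulVec, dotProduct_smul]

open MeasureTheory in
lemma MI_isHermitian (hA : A.PosDef) (hB : B.PosDef) :
    (Matrix.of fun i j : Fin m =>
      ∫ t in Set.Icc (0:ℝ) 1, geomMean t A B i j).IsHermitian := by
  have hg : ∀ t : ℝ, (geomMean t A B).IsHermitian :=
    fun t => (geomMean_posSemidef hA hB t).1
  rw [Matrix.IsHermitian]
  ext i j
  simp only [conjTranspose_apply, Matrix.of_apply]
  have : star (∫ t in Set.Icc (0:ℝ) 1, geomMean t A B j i)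
      = ∫ t in Set.Icc (0:ℝ) 1, star (geomMean t A B j i) :=
    (integral_conj (f := fun t => geomMean t A B j i)).symm
  rw [this]
  congr 1
  funext t
  simpa [conjTranspose_apply] using congrFun (congrFun (hg t) i) j

open MeasureTheory in
lemma quad_int (hA : A.PosDef) (hB : B.PosDef) (x : Fin m → ℂ) :
    star x ⬝ᵥ ((Matrix.of fun i j : Fin m =>
        ∫ t in Set.Icc (0:ℝ) 1, geomMean t A B i j) *ᵥ x)
      = ∫ t in Set.Icc (0:ℝ) 1, star x ⬝ᵥ (geomMean t A B *ᵥ x) := by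
  have hint : ∀ i j, IntegrableOn (fun t => geomMean t A B i j) (Set.Icc 0 1) :=
    fun i j => (cont_entry hA hB i j).integrableOn_Icc
  have h1 : star x ⬝ᵥ ((Matrix.of fun i j : Fin m =>
        ∫ t in Set.Icc (0:ℝ) 1, geomMean t A B i j) *ᵥ x)
      = ∑ i, ∑ j, star x i * ((∫ t in Set.Icc (0:ℝ) 1, geomMean t A B i j) * x j) := by
    simp [Matrix.mulVec, dotProduct, Finset.mul_sum]
  have h2 : (fun t => star x ⬝ᵥ (geomMean t A B *ᵥ x))
      = fun t => ∑ i, ∑ j, star x i * (geomMean t A B i j * x j) := by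
    funext t
    simp [Matrix.mulVec, dotProduct, Finset.mul_sum]
  rw [h1, h2]
  rw [integral_finset_sum _ (fun i _ =>
    integrable_finset_sum _ (fun j _ => (((hint i j).mul_const (x j)).const_mul (star x i))))]
  refine Finset.sum_congr rfl fun i _ => ?_
  rw [integral_finset_sum _ (fun j _ => ((hint i j).mul_const (x j)).const_mul (star x i))]
  refine Finset.sum_congr rfl fun j _ => ?_
  rw [integral_const_mul, integral_mul_const]

lemma cont_quad (hA : A.PosDef) (hB : B.PosDef) (x : Fin m → ℂ) :
    Continuous (fun t => star x ⬝ᵥ (geomMean t A B *ᵥ x)) := by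
  have hM : Continuous (fun t => geomMean t A B) :=
    continuous_matrix fun i j => cont_entry hA hB i j
  exact continuous_const.dotProduct (hM.matrix_mulVec continuous_const)

open MeasureTheory in
lemma integral_affine (a b : ℝ) :
    ∫ t in Set.Icc (0:ℝ) 1, ((1 - t) * a + t * b) = 2⁻¹ * a + 2⁻¹ * b := by
  rw [integral_Icc_eq_integral_Ioc, ← intervalIntegral.integral_of_le zero_le_one]
  have h : (fun t : ℝ => (1 - t) * a + t * b) = fun t => a + t * (b - a) := by
    funext t; ring
  rw [h, intervalIntegral.integral_add
    (Continuous.intervalIntegrable (by continuity : Continuous fun _ : ℝ => a) _ _)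
    (Continuous.intervalIntegrable (by continuity : Continuous fun t : ℝ => t * (b - a)) _ _)]
  rw [intervalIntegral.integral_mul_const, integral_id]
  simp
  ring

open MeasureTheory in
lemma integral_reflect (f : ℝ → ℝ) :
    ∫ t in Set.Icc (0:ℝ) 1, f (1 - t) = ∫ t in Set.Icc (0:ℝ) 1, f t := by
  rw [integral_Icc_eq_integral_Ioc, ← intervalIntegral.integral_of_le zero_le_one,
    integral_Icc_eq_integral_Ioc, ← intervalIntegral.integral_of_le zero_le_one,
    intervalIntegral.integral_comp_sub_left f 1]
  norm_num

end GM


open MeasureTheory in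
theorem stmt18 {m : ℕ} (A B : Matrix (Fin m) (Fin m) ℂ) (hA : A.PosDef) (hB : B.PosDef) :
    (((2:ℝ)⁻¹ • (A⁻¹ + B⁻¹))⁻¹ = (2:ℝ) • (A⁻¹ + B⁻¹)⁻¹) ∧
    (Matrix.of (fun i j : Fin m => ∫ t in Set.Icc (0:ℝ) 1, geomMean t A B i j) -
      (2:ℝ) • (A⁻¹ + B⁻¹)⁻¹).PosSemidef ∧
    ((2:ℝ)⁻¹ • (A + B) -
      Matrix.of (fun i j : Fin m => ∫ t in Set.Icc (0:ℝ) 1, geomMean t A B i j)).PosSemidef := by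
  refine ⟨GM.part1 hA hB, Matrix.PosSemidef.of_dotProduct_mulVec_nonneg ?_ ?_,
    Matrix.PosSemidef.of_dotProduct_mulVec_nonneg ?_ ?_⟩
  · exact (GM.MI_isHermitian hA hB).sub (GM.herm_smul (GM.H2_posSemidef hA hB).1 2)
  · intro x
    have hqc : Continuous fun t : ℝ => star x ⬝ᵥ (geomMean t A B *ᵥ x) := GM.cont_quad hA hB x
    have hqint : IntegrableOn (fun t : ℝ => star x ⬝ᵥ (geomMean t A B *ᵥ x)) (Set.Icc 0 1) :=
      hqc.integrableOn_Icc
    have him : ∀ t : ℝ, (star x ⬝ᵥ (geomMean t A B *ᵥ x)).im = 0 :=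
      fun t => GM.psd_im (GM.geomMean_posSemidef hA hB t) x
    have hh2 : 0 ≤ star x ⬝ᵥ ((A⁻¹ + B⁻¹)⁻¹ *ᵥ x) := (GM.H2_posSemidef hA hB).dotProduct_mulVec_nonneg x
    have him2 : (star x ⬝ᵥ ((A⁻¹ + B⁻¹)⁻¹ *ᵥ x)).im = 0 :=
      GM.psd_im (GM.H2_posSemidef hA hB) x
    rw [GM.quad_sub, GM.quad_int hA hB, GM.quad_smul]
    have hrc : Continuous fun t : ℝ => (star x ⬝ᵥ (geomMean t A B *ᵥ x)).re :=
      Complex.continuous_re.comp hqc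
    have hrc' : Continuous fun t : ℝ => (star x ⬝ᵥ (geomMean (1 - t) A B *ᵥ x)).re :=
      hrc.comp (continuous_const.sub continuous_id)
    have key : ∀ t ∈ Set.Icc (0:ℝ) 1,
        4 * (star x ⬝ᵥ ((A⁻¹ + B⁻¹)⁻¹ *ᵥ x)).re
          ≤ (star x ⬝ᵥ (geomMean t A B *ᵥ x)).re
            + (star x ⬝ᵥ (geomMean (1 - t) A B *ᵥ x)).re := by
      intro t ht
      have hre := GM.psd_re (GM.sandwich_lower hA hB ht.1 ht.2) x
      rw [GM.quad_sub, GM.quad_add, GM.quad_smul] at hre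
      simp only [Complex.sub_re, Complex.add_re, Complex.smul_re, smul_eq_mul] at hre
      linarith
    have hrefl : ∫ t in Set.Icc (0:ℝ) 1, (star x ⬝ᵥ (geomMean (1 - t) A B *ᵥ x)).re
        = ∫ t in Set.Icc (0:ℝ) 1, (star x ⬝ᵥ (geomMean t A B *ᵥ x)).re :=
      GM.integral_reflect fun s => (star x ⬝ᵥ (geomMean s A B *ᵥ x)).re
    have hmono : ∫ t in Set.Icc (0:ℝ) 1, (4 * (star x ⬝ᵥ ((A⁻¹ + B⁻¹)⁻¹ *ᵥ x)).re)
        ≤ ∫ t in Set.Icc (0:ℝ) 1, ((star x ⬝ᵥ (geomMean t A B *ᵥ x)).re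
            + (star x ⬝ᵥ (geomMean (1 - t) A B *ᵥ x)).re) :=
      setIntegral_mono_on (continuous_const.integrableOn_Icc)
        ((hrc.integrableOn_Icc).add (hrc'.integrableOn_Icc)) measurableSet_Icc key
    have hconst : ∫ _ in Set.Icc (0:ℝ) 1, (4 * (star x ⬝ᵥ ((A⁻¹ + B⁻¹)⁻¹ *ᵥ x)).re)
        = 4 * (star x ⬝ᵥ ((A⁻¹ + B⁻¹)⁻¹ *ᵥ x)).re := by
      rw [setIntegral_const]
      simp [Real.volume_Icc]
    have hsum : ∫ t in Set.Icc (0:ℝ) 1, ((star x ⬝ᵥ (geomMean t A B *ᵥ x)).re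
            + (star x ⬝ᵥ (geomMean (1 - t) A B *ᵥ x)).re)
        = (∫ t in Set.Icc (0:ℝ) 1, (star x ⬝ᵥ (geomMean t A B *ᵥ x)).re)
          + ∫ t in Set.Icc (0:ℝ) 1, (star x ⬝ᵥ (geomMean (1 - t) A B *ᵥ x)).re :=
      integral_add hrc.integrableOn_Icc hrc'.integrableOn_Icc
    have hre_int : ∫ t in Set.Icc (0:ℝ) 1, (star x ⬝ᵥ (geomMean t A B *ᵥ x)).re
        = (∫ t in Set.Icc (0:ℝ) 1, star x ⬝ᵥ (geomMean t A B *ᵥ x)).re := by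
      simpa using integral_re hqint
    have him_int : (∫ t in Set.Icc (0:ℝ) 1, star x ⬝ᵥ (geomMean t A B *ᵥ x)).im = 0 := by
      have h := integral_im hqint
      simpa [him] using h.symm
    rw [Complex.le_def]
    constructor
    · simp only [Complex.sub_re, Complex.smul_re, Complex.zero_re, smul_eq_mul]
      rw [← hre_int]
      rw [hconst] at hmono
      rw [hsum, hrefl] at hmono
      linarith
    · simp only [Complex.sub_im, Complex.smul_im, Complex.zero_im, smul_eq_mul,
        him_int, him2, mul_zero, sub_zero]
  · exact (GM.herm_smul (hA.1.add hB.1) 2⁻¹).sub (GM.MI_isHermitian hA hB)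
  · intro x
    have hqc : Continuous fun t : ℝ => star x ⬝ᵥ (geomMean t A B *ᵥ x) := GM.cont_quad hA hB x
    have hqint : IntegrableOn (fun t : ℝ => star x ⬝ᵥ (geomMean t A B *ᵥ x)) (Set.Icc 0 1) :=
      hqc.integrableOn_Icc
    have him : ∀ t : ℝ, (star x ⬝ᵥ (geomMean t A B *ᵥ x)).im = 0 :=
      fun t => GM.psd_im (GM.geomMean_posSemidef hA hB t) x
    have himA : (star x ⬝ᵥ (A *ᵥ x)).im = 0 := GM.psd_im hA.posSemidef x
    have himB : (star x ⬝ᵥ (B *ᵥ x)).im = 0 := GM.psd_im hB.posSemidef x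
    rw [GM.quad_sub, GM.quad_smul, GM.quad_add, GM.quad_int hA hB]
    have hrc : Continuous fun t : ℝ => (star x ⬝ᵥ (geomMean t A B *ᵥ x)).re :=
      Complex.continuous_re.comp hqc
    have key : ∀ t ∈ Set.Icc (0:ℝ) 1, (star x ⬝ᵥ (geomMean t A B *ᵥ x)).re
        ≤ (1 - t) * (star x ⬝ᵥ (A *ᵥ x)).re + t * (star x ⬝ᵥ (B *ᵥ x)).re := by
      intro t ht
      have hre := GM.psd_re (GM.sandwich_upper hA hB ht.1 ht.2) x
      rw [GM.quad_sub, GM.quad_add, GM.quad_smul, GM.quad_smul] at hre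
      simp only [Complex.sub_re, Complex.add_re, Complex.smul_re, smul_eq_mul] at hre
      linarith
    have hmono : ∫ t in Set.Icc (0:ℝ) 1, (star x ⬝ᵥ (geomMean t A B *ᵥ x)).re
        ≤ ∫ t in Set.Icc (0:ℝ) 1, ((1 - t) * (star x ⬝ᵥ (A *ᵥ x)).re
            + t * (star x ⬝ᵥ (B *ᵥ x)).re) :=
      setIntegral_mono_on hrc.integrableOn_Icc
        (((continuous_const.sub continuous_id).mul continuous_const).add
          (continuous_id.mul continuous_const)).integrableOn_Icc measurableSet_Icc key
    rw [GM.integral_affine] at hmono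
    have hre_int : ∫ t in Set.Icc (0:ℝ) 1, (star x ⬝ᵥ (geomMean t A B *ᵥ x)).re
        = (∫ t in Set.Icc (0:ℝ) 1, star x ⬝ᵥ (geomMean t A B *ᵥ x)).re := by
      simpa using integral_re hqint
    have him_int : (∫ t in Set.Icc (0:ℝ) 1, star x ⬝ᵥ (geomMean t A B *ᵥ x)).im = 0 := by
      have h := integral_im hqint
      simpa [him] using h.symm
    rw [Complex.le_def]
    constructor
    · simp only [Complex.sub_re, Complex.add_re, Complex.smul_re, Complex.zero_re, smul_eq_mul]
      rw [← hre_int]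
      linarith
    · simp only [Complex.sub_im, Complex.add_im, Complex.smul_im, Complex.zero_im, smul_eq_mul,
        him_int, himA, himB, mul_zero, add_zero, sub_zero]
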